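/- A unitary automorphism A of ℂⁿ = ℂ^k × ℂ^{n−k} satisfies A(C₀) = C₀, where C₀ = ℂ^k × ℝ^{n−k}, if and only if A is block diagonal, A = A₁ ⊕ A₂, where A₁ is a unitary automorphism of ℂ^k and A₂ is a unitary automorphism of ℂ^{n−k} mapping ℝ^{n−k} onto itself (that is, A₂ is the complexification of a real orthogonal transformation of ℝ^{n−k}). In other words, the isotropy group of C₀ in U(n) is U(k) × O(n−k). -/

import Mathlib

/-- The model coisotropic subspace `C₀ = ℂ^k × ℝ^m ⊆ ℂ^k × ℂ^m`, as the set of vectors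
whose coordinates in the second block are real. -/
def modelC0 (k m : ℕ) : Set ((Fin k ⊕ Fin m) → ℂ) :=
  {v | ∀ j : Fin m, (v (Sum.inr j)).im = 0}

lemma aux_mem {k m : ℕ} (N : Matrix (Fin k ⊕ Fin m) (Fin k ⊕ Fin m) ℂ)
    (h1 : ∀ j i, N (Sum.inr j) (Sum.inl i) = 0)
    (h2 : ∀ j j', (N (Sum.inr j) (Sum.inr j')).im = 0)
    {v} (hv : v ∈ modelC0 k m) : N.mulVec v ∈ modelC0 k m := by
  intro j
  show (∑ c, N (Sum.inr j) c * v c).im = 0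
  rw [Complex.im_sum, Fintype.sum_sum_type]
  rw [Finset.sum_eq_zero (fun i _ => by rw [h1, zero_mul, Complex.zero_im]),
    Finset.sum_eq_zero (fun j' _ => by rw [Complex.mul_im, h2, hv j', zero_mul, mul_zero, add_zero]),
    add_zero]

open Matrix

/-- A unitary matrix `A` of `ℂⁿ = ℂ^k × ℂ^m` satisfies `A(C₀) = C₀`,
where `C₀ = ℂ^k × ℝ^m`, if and only if `A` is block diagonal `A = A₁ ⊕ A₂` with
`A₁` unitary on `ℂ^k` and `A₂` the complexification of a real orthogonal matrix on
`ℝ^m`; i.e. the isotropy group of `C₀` in `U(n)` is `U(k) × O(n−k)`. -/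
theorem isotropy_of_model_coisotropic (k m : ℕ)
    (A : Matrix.unitaryGroup (Fin k ⊕ Fin m) ℂ) :
    (fun v => (A : Matrix (Fin k ⊕ Fin m) (Fin k ⊕ Fin m) ℂ).mulVec v) '' modelC0 k m
        = modelC0 k m ↔
      ∃ A₁ ∈ Matrix.unitaryGroup (Fin k) ℂ, ∃ A₂ ∈ Matrix.orthogonalGroup (Fin m) ℝ,
        (A : Matrix (Fin k ⊕ Fin m) (Fin k ⊕ Fin m) ℂ)
          = Matrix.fromBlocks A₁ 0 0 (A₂.map Complex.ofReal) := by
  set M := (A : Matrix (Fin k ⊕ Fin m) (Fin k ⊕ Fin m) ℂ) with hM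
  have hMunit : M * star M = 1 := Matrix.mem_unitaryGroup_iff.mp A.2
  constructor
  · intro himg
    have hsub : ∀ v ∈ modelC0 k m, M.mulVec v ∈ modelC0 k m := by
      intro v hv
      rw [← himg]; exact ⟨v, hv, rfl⟩
    -- lower-left block vanishes
    have hC : ∀ j i, M (Sum.inr j) (Sum.inl i) = 0 := by
      intro j i
      have hone : Pi.single (Sum.inl i : Fin k ⊕ Fin m) (1 : ℂ) ∈ modelC0 k m := by
        intro j'; simp [Pi.single_apply]
      have hI : Pi.single (Sum.inl i : Fin k ⊕ Fin m) (Complex.I) ∈ modelC0 k m := by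
        intro j'; simp [Pi.single_apply]
      have h1 := hsub _ hone j
      have h2 := hsub _ hI j
      rw [Matrix.mulVec_single] at h1 h2
      have hre : (M (Sum.inr j) (Sum.inl i)).re = 0 := by
        simpa [Complex.mul_im] using h2
      have him : (M (Sum.inr j) (Sum.inl i)).im = 0 := by simpa using h1
      exact Complex.ext hre him
    -- lower-right block is real
    have hE : ∀ j j', (M (Sum.inr j) (Sum.inr j')).im = 0 := by
      intro j j'
      have hone : Pi.single (Sum.inr j' : Fin k ⊕ Fin m) (1 : ℂ) ∈ modelC0 k m := by
        intro j''; simp [Pi.single_apply]; split <;> simp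
      have h1 := hsub _ hone j
      rw [Matrix.mulVec_single] at h1
      simpa using h1
    set A₁ := M.toBlocks₁₁ with hA₁
    set D := M.toBlocks₁₂ with hD
    set A₂ : Matrix (Fin m) (Fin m) ℝ := fun j j' => (M (Sum.inr j) (Sum.inr j')).re with hA₂
    have hblk : M = Matrix.fromBlocks A₁ D 0 (A₂.map Complex.ofReal) := by
      rw [← Matrix.fromBlocks_toBlocks M, Matrix.fromBlocks_inj]
      refine ⟨rfl, rfl, ?_, ?_⟩
      · ext j i
        simpa [Matrix.toBlocks₂₁] using hC j i
      · ext j j'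
        simp only [Matrix.toBlocks₂₂, Matrix.map_apply, Matrix.of_apply, hA₂]
        exact Complex.ext rfl (by rw [hE j j']; rfl)
    -- unitarity relations on blocks
    have hprod : Matrix.fromBlocks
        (A₁ * A₁ᴴ + D * Dᴴ) (D * (A₂.map Complex.ofReal)ᴴ)
        ((A₂.map Complex.ofReal) * Dᴴ) ((A₂.map Complex.ofReal) * (A₂.map Complex.ofReal)ᴴ)
        = Matrix.fromBlocks 1 0 0 1 := by
      rw [Matrix.fromBlocks_one]
      calc _ = M * Mᴴ := by
              rw [hblk, Matrix.fromBlocks_conjTranspose, Matrix.fromBlocks_multiply]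
              simp
        _ = 1 := hMunit
    rw [Matrix.fromBlocks_inj] at hprod
    obtain ⟨h11, h12, _, h22⟩ := hprod
    have hEconj : (A₂.map Complex.ofReal)ᴴ = A₂ᵀ.map Complex.ofReal := by
      ext j j'; simp [Matrix.conjTranspose_apply]
    have hEunit : (A₂.map Complex.ofReal)ᴴ * (A₂.map Complex.ofReal) = 1 :=
      mul_eq_one_comm.mp h22
    have hD0 : D = 0 := by
      calc D = D * ((A₂.map Complex.ofReal)ᴴ * (A₂.map Complex.ofReal)) := by
              rw [hEunit, Matrix.mul_one]
        _ = (D * (A₂.map Complex.ofReal)ᴴ) * (A₂.map Complex.ofReal) := by rw [Matrix.mul_assoc]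
        _ = 0 := by rw [h12, Matrix.zero_mul]
    have hA₂orth : A₂ ∈ Matrix.orthogonalGroup (Fin m) ℝ := by
      rw [Matrix.mem_orthogonalGroup_iff]
      apply Matrix.map_injective Complex.ofReal_injective
      have hcast : (A₂ * star A₂).map Complex.ofReal
          = (A₂.map Complex.ofReal) * (A₂.map Complex.ofReal)ᴴ := by
        ext j j'
        simp only [Matrix.map_apply, Matrix.mul_apply, Complex.ofReal_sum, Complex.ofReal_mul,
          Matrix.conjTranspose_apply, Matrix.star_apply, star_trivial, Complex.star_def,
          Complex.conj_ofReal]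
      show (A₂ * star A₂).map Complex.ofReal = (1 : Matrix (Fin m) (Fin m) ℝ).map Complex.ofReal
      rw [hcast, h22, Matrix.map_one _ Complex.ofReal_zero Complex.ofReal_one]
    refine ⟨A₁, ?_, A₂, hA₂orth, ?_⟩
    · rw [Matrix.mem_unitaryGroup_iff]
      rw [hD0, Matrix.zero_mul, add_zero] at h11
      exact h11
    · rw [hblk, hD0]
  · rintro ⟨A₁, hA₁u, A₂, hA₂o, hblk⟩
    have h1 : ∀ j i, M (Sum.inr j) (Sum.inl i) = 0 := by
      intro j i; rw [hblk]; simp [Matrix.fromBlocks]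
    have h2 : ∀ j j', (M (Sum.inr j) (Sum.inr j')).im = 0 := by
      intro j j'; rw [hblk]; simp [Matrix.fromBlocks]
    have h1' : ∀ j i, (star M) (Sum.inr j) (Sum.inl i) = 0 := by
      intro j i
      show (star (M (Sum.inl i) (Sum.inr j))) = 0
      rw [hblk]; simp [Matrix.fromBlocks]
    have h2' : ∀ j j', ((star M) (Sum.inr j) (Sum.inr j')).im = 0 := by
      intro j j'
      show (star (M (Sum.inr j') (Sum.inr j))).im = 0
      rw [hblk]; simp [Matrix.fromBlocks]
    apply Set.Subset.antisymm
    · rintro w ⟨v, hv, rfl⟩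
      exact aux_mem M h1 h2 hv
    · intro w hw
      refine ⟨(star M).mulVec w, aux_mem (star M) h1' h2' hw, ?_⟩
      show M.mulVec _ = w
      rw [Matrix.mulVec_mulVec, hMunit, Matrix.one_mulVec]
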